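/- Let G be a monoid (or group), K a field of characteristic zero, and let ρ₁, ρ₂ be two finite-dimensional semisimple representations of G over K with equal traces, i.e., trace ρ₁(g) = trace ρ₂(g) for all g ∈ G. Then ρ₁ and ρ₂ are isomorphic. -/

import Mathlib

open LinearMap Module

section Helpers

variable {K : Type} [Field K]

private lemma BN.trace_eq_of_equiv {B M N : Type} [Ring B] [Algebra K B]
    [AddCommGroup M] [Module K M] [Module B M] [IsScalarTower K B M]
    [AddCommGroup N] [Module K N] [Module B N] [IsScalarTower K B N]
    (e : M ≃ₗ[B] N) (b : B) :
    trace K M (DistribMulAction.toLinearMap K M b)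
      = trace K N (DistribMulAction.toLinearMap K N b) := by
  rw [← LinearMap.trace_conj' (DistribMulAction.toLinearMap K M b) (e.restrictScalars K)]
  congr 1
  apply LinearMap.ext
  intro n
  simp only [LinearEquiv.conj_apply, LinearMap.comp_apply, LinearEquiv.coe_coe,
    LinearEquiv.restrictScalars_apply, DistribSMul.toLinearMap_apply]
  change e (b • _) = b • n
  rw [map_smul]
  exact congrArg (b • ·) (e.apply_symm_apply n)

private lemma BN.trace_prod {B M N : Type} [Ring B] [Algebra K B]
    [AddCommGroup M] [Module K M] [Module B M] [IsScalarTower K B M] [FiniteDimensional K M]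
    [AddCommGroup N] [Module K N] [Module B N] [IsScalarTower K B N] [FiniteDimensional K N]
    (b : B) :
    trace K (M × N) (DistribMulAction.toLinearMap K (M × N) b)
      = trace K M (DistribMulAction.toLinearMap K M b)
        + trace K N (DistribMulAction.toLinearMap K N b) := by
  rw [show DistribMulAction.toLinearMap K (M × N) b
      = (DistribMulAction.toLinearMap K M b).prodMap (DistribMulAction.toLinearMap K N b) from rfl,
    LinearMap.trace_prodMap']

/-- The main induction: over a semisimple `K`-algebra `B`, two finite-dimensional (over `K`)
modules with equal trace characters are isomorphic. -/
private theorem BN.main [CharZero K] {B : Type} [Ring B] [Algebra K B]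
    [IsSemisimpleRing B] (n : ℕ) :
    ∀ (M N : Type) [AddCommGroup M] [Module K M] [Module B M] [IsScalarTower K B M]
      [FiniteDimensional K M]
      [AddCommGroup N] [Module K N] [Module B N] [IsScalarTower K B N] [FiniteDimensional K N],
      finrank K M = n →
      (∀ b : B, trace K M (DistribMulAction.toLinearMap K M b)
        = trace K N (DistribMulAction.toLinearMap K N b)) →
      Nonempty (M ≃ₗ[B] N) := by
  induction n using Nat.strong_induction_on with
  | _ n IH =>
  intro M N _ _ _ _ _ _ _ _ _ _ hn htr
  -- the dimensions agree
  have hdim : finrank K M = finrank K N := by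
    have h1 := htr 1
    rw [show DistribMulAction.toLinearMap K M (1 : B) = LinearMap.id from
        LinearMap.ext fun m => one_smul B m,
      show DistribMulAction.toLinearMap K N (1 : B) = LinearMap.id from
        LinearMap.ext fun m => one_smul B m, trace_id, trace_id] at h1
    exact_mod_cast h1
  rcases subsingleton_or_nontrivial M with hM | hM
  · -- both trivial
    have h0 : finrank K M = 0 := finrank_zero_iff.mpr hM
    have : Subsingleton N := finrank_zero_iff.mp (hdim ▸ h0)
    exact ⟨LinearEquiv.ofLinear 0 0
      (LinearMap.ext fun x => Subsingleton.elim _ _)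
      (LinearMap.ext fun x => Subsingleton.elim _ _)⟩
  · -- pick a simple submodule S of M
    obtain ⟨S, hS⟩ := IsSemisimpleModule.exists_simple_submodule B M
    haveI := hS
    haveI : Nontrivial S := IsSimpleModule.nontrivial B S
    haveI : FiniteDimensional K S :=
      FiniteDimensional.of_injective (S.subtype.restrictScalars K) S.injective_subtype
    obtain ⟨s₀, hs₀⟩ := exists_ne (0 : S)
    -- S embeds in N
    have hexists : ∃ f : S →ₗ[B] N, f ≠ 0 := by
      by_contra hcon
      push_neg at hcon
      set ℓ : B →ₗ[B] S := LinearMap.toSpanSingleton B S s₀ with hℓdef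
      have hsurj : Function.Surjective ℓ := IsSimpleModule.toSpanSingleton_surjective B hs₀
      obtain ⟨C, hC⟩ := exists_isCompl (LinearMap.ker ℓ)
      set q : S ≃ₗ[B] C := (ℓ.quotKerEquivOfSurjective hsurj).symm.trans
        (Submodule.quotientEquivOfIsCompl (LinearMap.ker ℓ) C hC) with hq
      set σ : S →ₗ[B] B := C.subtype ∘ₗ q.toLinearMap with hσ
      have hsec : ∀ x : S, ℓ (σ x) = x := by
        intro x
        have h1 : (Submodule.Quotient.mk (σ x) : B ⧸ LinearMap.ker ℓ)
            = (ℓ.quotKerEquivOfSurjective hsurj).symm x :=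
          Submodule.mk_quotientEquivOfIsCompl_apply hC _
        have h2 : (ℓ.quotKerEquivOfSurjective hsurj)
            (Submodule.Quotient.mk (σ x) : B ⧸ LinearMap.ker ℓ) = ℓ (σ x) := rfl
        rw [← h2, h1, LinearEquiv.apply_symm_apply]
      set e : B := σ s₀ with he
      have he_s : e • s₀ = s₀ := by
        have h := hsec s₀
        rwa [hℓdef, LinearMap.toSpanSingleton_apply] at h
      have hee : e * e = e := by
        calc e * e = σ (e • s₀) := by rw [map_smul]; rfl
        _ = σ s₀ := by rw [he_s]
        _ = e := rfl
      -- e annihilates N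
      have heN : ∀ x : N, e • x = 0 := by
        intro x
        have h := hcon ((LinearMap.toSpanSingleton B N x).comp σ)
        have := LinearMap.congr_fun h s₀
        simpa [LinearMap.toSpanSingleton_apply] using this
      -- trace of e on M is positive
      set EM : M →ₗ[K] M := DistribMulAction.toLinearMap K M e with hEM
      have hEM_idem : EM ∘ₗ EM = EM := by
        apply LinearMap.ext; intro m
        show e • e • m = e • m
        rw [← mul_smul, hee]
      obtain ⟨p, hp⟩ := (LinearMap.isProj_iff_isIdempotentElem EM).mpr hEM_idem
      have hs0M : EM (s₀ : M) = (s₀ : M) := by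
        show e • (s₀ : M) = (s₀ : M)
        rw [← Submodule.coe_smul, he_s]
      have hs0ne : (s₀ : M) ≠ 0 := by
        simpa [Submodule.coe_eq_zero] using hs₀
      have hpn : Nontrivial p := by
        refine ⟨⟨⟨EM (s₀ : M), hp.map_mem _⟩, 0, ?_⟩⟩
        simp only [ne_eq, Submodule.mk_eq_zero]
        rw [hs0M]; exact hs0ne
      have hpos : 0 < finrank K p := finrank_pos_iff.mpr hpn
      have htrM : trace K M EM = (finrank K p : K) := hp.trace
      have htrN : trace K N (DistribMulAction.toLinearMap K N e) = 0 := by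
        rw [show DistribMulAction.toLinearMap K N e = 0 from LinearMap.ext fun x => heN x,
          map_zero]
      have h := htr e
      rw [← hEM, htrM, htrN] at h
      exact (Nat.cast_ne_zero (R := K)).mpr hpos.ne' h
    obtain ⟨f, hf⟩ := hexists
    have hinj : Function.Injective f := LinearMap.injective_of_ne_zero hf
    set S' : Submodule B N := LinearMap.range f with hS'
    have eS : S ≃ₗ[B] S' := LinearEquiv.ofInjective f hinj
    haveI : FiniteDimensional K S' :=
      FiniteDimensional.of_injective (S'.subtype.restrictScalars K) S'.injective_subtype
    obtain ⟨M', hM'⟩ := exists_isCompl S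
    obtain ⟨N', hN'⟩ := exists_isCompl S'
    haveI : FiniteDimensional K M' :=
      FiniteDimensional.of_injective (M'.subtype.restrictScalars K) M'.injective_subtype
    haveI : FiniteDimensional K N' :=
      FiniteDimensional.of_injective (N'.subtype.restrictScalars K) N'.injective_subtype
    have ψM : (S × M') ≃ₗ[B] M := Submodule.prodEquivOfIsCompl S M' hM'
    have ψN : (S' × N') ≃ₗ[B] N := Submodule.prodEquivOfIsCompl S' N' hN'
    -- trace decompositions
    have htrM' : ∀ b : B, trace K M (DistribMulAction.toLinearMap K M b)
        = trace K S (DistribMulAction.toLinearMap K S b)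
          + trace K M' (DistribMulAction.toLinearMap K M' b) := fun b => by
      rw [← BN.trace_eq_of_equiv ψM b, BN.trace_prod]
    have htrN' : ∀ b : B, trace K N (DistribMulAction.toLinearMap K N b)
        = trace K S' (DistribMulAction.toLinearMap K S' b)
          + trace K N' (DistribMulAction.toLinearMap K N' b) := fun b => by
      rw [← BN.trace_eq_of_equiv ψN b, BN.trace_prod]
    have htrSS' : ∀ b : B, trace K S (DistribMulAction.toLinearMap K S b)
        = trace K S' (DistribMulAction.toLinearMap K S' b) := fun b =>
      BN.trace_eq_of_equiv eS b
    have htr2 : ∀ b : B, trace K M' (DistribMulAction.toLinearMap K M' b)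
        = trace K N' (DistribMulAction.toLinearMap K N' b) := by
      intro b
      have h := htr b
      rw [htrM' b, htrN' b, htrSS' b] at h
      exact add_left_cancel h
    -- dimension count
    have hfr : finrank K M = finrank K S + finrank K M' := by
      rw [← LinearEquiv.finrank_eq (ψM.restrictScalars K), finrank_prod]
    have hSpos : 0 < finrank K S := finrank_pos_iff.mpr inferInstance
    have hlt : finrank K M' < n := by omega
    obtain ⟨g⟩ := IH (finrank K M') hlt M' N' rfl htr2
    exact ⟨ψM.symm ≪≫ₗ (LinearEquiv.prodCongr eS g) ≪≫ₗ ψN⟩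

end Helpers

set_option maxHeartbeats 2000000 in
set_option synthInstance.maxHeartbeats 400000 in
private theorem BN.core {K A M N : Type} [Field K] [CharZero K] [Ring A] [Algebra K A]
    [AddCommGroup M] [Module K M] [Module A M] [IsScalarTower K A M] [FiniteDimensional K M]
    [AddCommGroup N] [Module K N] [Module A N] [IsScalarTower K A N] [FiniteDimensional K N]
    (hM : IsSemisimpleModule A M) (hN : IsSemisimpleModule A N)
    (htr : ∀ a : A, trace K M (DistribMulAction.toLinearMap K M a)
      = trace K N (DistribMulAction.toLinearMap K N a)) :
    Nonempty (M ≃ₗ[A] N) := by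
  classical
  -- the algebra map into the product of endomorphism algebras
  let φ : A →ₐ[K] (Module.End K M × Module.End K N) :=
    { toRingHom := (Module.toModuleEnd K (S := A) M).prod (Module.toModuleEnd K (S := A) N)
      commutes' := by
        intro k
        refine Prod.ext ?_ ?_ <;>
          · apply LinearMap.ext
            intro m
            show (algebraMap K A k) • m = _
            rw [algebraMap_smul]
            symm
            exact Module.algebraMap_end_apply K _ _ k m }
  let Bs : Subalgebra K (Module.End K M × Module.End K N) := φ.range
  let σ : A →+* Bs := (φ.rangeRestrict : A →ₐ[K] Bs).toRingHom
  have hσ : Function.Surjective σ := φ.rangeRestrict_surjective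
  letI instBM : Module Bs M := Module.compHom M ((RingHom.fst _ _).comp Bs.val.toRingHom)
  letI instBN : Module Bs N := Module.compHom N ((RingHom.snd _ _).comp Bs.val.toRingHom)
  have hsmulM : ∀ (a : A) (m : M), σ a • m = a • m := fun a m => rfl
  have hsmulN : ∀ (a : A) (x : N), σ a • x = a • x := fun a x => rfl
  letI : IsScalarTower K Bs M := ⟨fun k b m => by
    show ((k • b : Bs) : Module.End K M × Module.End K N).1 m
        = k • (((b : Module.End K M × Module.End K N)).1 m)
    rw [SetLike.val_smul]
    rfl⟩
  letI : IsScalarTower K Bs N := ⟨fun k b x => by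
    show ((k • b : Bs) : Module.End K M × Module.End K N).2 x
        = k • (((b : Module.End K M × Module.End K N)).2 x)
    rw [SetLike.val_smul]
    rfl⟩
  letI : RingHomSurjective σ := ⟨hσ⟩
  let lM : M →ₛₗ[σ] M :=
    { toFun := id, map_add' := fun _ _ => rfl, map_smul' := fun a m => (hsmulM a m).symm }
  let lN : N →ₛₗ[σ] N :=
    { toFun := id, map_add' := fun _ _ => rfl, map_smul' := fun a x => (hsmulN a x).symm }
  haveI hssM : IsSemisimpleModule Bs M :=
    (lM.isSemisimpleModule_iff_of_bijective Function.bijective_id).mp hM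
  haveI hssN : IsSemisimpleModule Bs N :=
    (lN.isSemisimpleModule_iff_of_bijective Function.bijective_id).mp hN
  haveI hssMN : IsSemisimpleModule Bs (M × N) := by
    rw [← Submodule.topEquiv.isSemisimpleModule_iff_of_bijective (LinearEquiv.bijective _),
      ← LinearMap.sup_range_inl_inr]
    exact IsSemisimpleModule.sup (IsSemisimpleModule.range _) (IsSemisimpleModule.range _)
  -- a finite spanning family over K
  obtain ⟨n, s, hs⟩ := Module.Finite.exists_fin (R := K) (M := M × N)
  let F : Bs →ₗ[Bs] (Fin n → M × N) :=
    LinearMap.pi fun i => LinearMap.toSpanSingleton Bs (M × N) (s i)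
  have hFinj : Function.Injective F := by
    intro b b' hbb'
    have hz : ∀ i, (b - b') • (s i) = 0 := by
      intro i
      have := congrFun hbb' i
      simp only [F, LinearMap.pi_apply, LinearMap.toSpanSingleton_apply] at this
      rw [sub_smul, this, sub_self]
    -- the common kernel is a K-submodule containing a spanning set
    set bb := b - b' with hbb
    set D : (M × N) →ₗ[K] (M × N) :=
      ((bb : Module.End K M × Module.End K N).1).prodMap
        ((bb : Module.End K M × Module.End K N).2) with hD
    have hker : ∀ x : M × N, x ∈ Submodule.span K (Set.range s) → D x = 0 := by
      intro x hx
      have hle : Submodule.span K (Set.range s) ≤ LinearMap.ker D := by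
        rw [Submodule.span_le]
        rintro _ ⟨i, rfl⟩
        exact hz i
      exact hle hx
    have hD0 : D = 0 := by
      apply LinearMap.ext
      intro x
      exact hker x (hs ▸ Submodule.mem_top)
    have h1 : (bb : Module.End K M × Module.End K N).1 = 0 := by
      apply LinearMap.ext; intro m
      have := congrArg Prod.fst (LinearMap.congr_fun hD0 (m, 0))
      simpa [hD] using this
    have h2 : (bb : Module.End K M × Module.End K N).2 = 0 := by
      apply LinearMap.ext; intro x
      have := congrArg Prod.snd (LinearMap.congr_fun hD0 (0, x))
      simpa [hD] using this
    have : bb = 0 := by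
      apply Subtype.ext
      exact Prod.ext h1 h2
    rw [hbb] at this
    exact sub_eq_zero.mp this
  haveI : IsSemisimpleModule Bs (Fin n → M × N) :=
    isSemisimpleModule_of_isSemisimpleModule_submodule'
      (p := fun i => LinearMap.range (LinearMap.single Bs (fun _ : Fin n => M × N) i))
      (fun i => IsSemisimpleModule.range _)
      (by simp_rw [LinearMap.range_eq_map, Submodule.iSup_map_single, Submodule.pi_top])
  haveI : IsSemisimpleRing Bs := by
    have e : Bs ≃ₗ[Bs] LinearMap.range F := LinearEquiv.ofInjective F hFinj
    haveI hr : IsSemisimpleModule Bs ↥(LinearMap.range F) :=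
      IsSemisimpleModule.submodule Bs (Fin n → M × N)
    exact IsSemisimpleModule.congr (M := ↥(LinearMap.range F)) e
  have htrB : ∀ b : Bs, trace K M (DistribMulAction.toLinearMap K M b)
      = trace K N (DistribMulAction.toLinearMap K N b) := by
    intro b
    obtain ⟨a, rfl⟩ := hσ b
    have e1 : DistribMulAction.toLinearMap K M (σ a) = DistribMulAction.toLinearMap K M a :=
      LinearMap.ext fun m => hsmulM a m
    have e2 : DistribMulAction.toLinearMap K N (σ a) = DistribMulAction.toLinearMap K N a :=
      LinearMap.ext fun x => hsmulN a x
    rw [e1, e2]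
    exact htr a
  obtain ⟨g⟩ := BN.main (K := K) (B := Bs) (finrank K M) M N rfl htrB
  exact ⟨{ toFun := g, invFun := g.symm, left_inv := g.left_inv, right_inv := g.right_inv,
           map_add' := g.map_add, map_smul' := fun a m => by
             change g (a • m) = a • g m
             rw [← hsmulM a m, map_smul, hsmulN] }⟩

/-- Brauer–Nesbitt in characteristic zero: two finite-dimensional
semisimple representations of a monoid `G` over a field `K` of characteristic zero
with equal traces are isomorphic (as modules over the monoid algebra). -/
theorem brauer_nesbitt_char_zero
    {K G V W : Type} [Field K] [CharZero K] [Monoid G]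
    [AddCommGroup V] [Module K V] [FiniteDimensional K V]
    [AddCommGroup W] [Module K W] [FiniteDimensional K W]
    (ρ₁ : Representation K G V) (ρ₂ : Representation K G W)
    (h₁ : IsSemisimpleModule (MonoidAlgebra K G) ρ₁.asModule)
    (h₂ : IsSemisimpleModule (MonoidAlgebra K G) ρ₂.asModule)
    (htr : ∀ g : G, LinearMap.trace K V (ρ₁ g) = LinearMap.trace K W (ρ₂ g)) :
    Nonempty (ρ₁.asModule ≃ₗ[MonoidAlgebra K G] ρ₂.asModule) := by
  classical
  letI : FiniteDimensional K ρ₁.asModule := inferInstanceAs (FiniteDimensional K V)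
  letI : FiniteDimensional K ρ₂.asModule := inferInstanceAs (FiniteDimensional K W)
  haveI t1 : IsScalarTower K (MonoidAlgebra K G) ρ₁.asModule := ⟨fun k r m => by
    apply ρ₁.asModuleEquiv.injective
    rw [ρ₁.asModuleEquiv_map_smul (k • r) m,
      show ρ₁.asModuleEquiv (k • (r • m)) = k • ρ₁.asModuleEquiv (r • m) from rfl,
      ρ₁.asModuleEquiv_map_smul r m, map_smul]
    rfl⟩
  haveI t2 : IsScalarTower K (MonoidAlgebra K G) ρ₂.asModule := ⟨fun k r m => by
    apply ρ₂.asModuleEquiv.injective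
    rw [ρ₂.asModuleEquiv_map_smul (k • r) m,
      show ρ₂.asModuleEquiv (k • (r • m)) = k • ρ₂.asModuleEquiv (r • m) from rfl,
      ρ₂.asModuleEquiv_map_smul r m, map_smul]
    rfl⟩
  let ε₁ : ρ₁.asModule ≃ₗ[K] V :=
    { ρ₁.asModuleEquiv with map_smul' := fun k x => rfl }
  let ε₂ : ρ₂.asModule ≃ₗ[K] W :=
    { ρ₂.asModuleEquiv with map_smul' := fun k x => rfl }
  have key1 : ∀ a : MonoidAlgebra K G,
      trace K ρ₁.asModule (DistribMulAction.toLinearMap K ρ₁.asModule a)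
        = trace K V (ρ₁.asAlgebraHom a) := by
    intro a
    rw [← LinearMap.trace_conj' (DistribMulAction.toLinearMap K ρ₁.asModule a) ε₁]
    congr 1
  have key2 : ∀ a : MonoidAlgebra K G,
      trace K ρ₂.asModule (DistribMulAction.toLinearMap K ρ₂.asModule a)
        = trace K W (ρ₂.asAlgebraHom a) := by
    intro a
    rw [← LinearMap.trace_conj' (DistribMulAction.toLinearMap K ρ₂.asModule a) ε₂]
    congr 1
  have key : ∀ a : MonoidAlgebra K G,
      trace K V (ρ₁.asAlgebraHom a) = trace K W (ρ₂.asAlgebraHom a) := by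
    intro a
    induction a using MonoidAlgebra.induction_linear with
    | zero => simp
    | add f g hf hg => rw [map_add, map_add, map_add, map_add, hf, hg]
    | single g k =>
      rw [Representation.asAlgebraHom_single, Representation.asAlgebraHom_single,
        map_smul, map_smul, htr g]
  have htrA : ∀ a : MonoidAlgebra K G,
      trace K ρ₁.asModule (DistribMulAction.toLinearMap K ρ₁.asModule a)
        = trace K ρ₂.asModule (DistribMulAction.toLinearMap K ρ₂.asModule a) := by
    intro a
    rw [key1 a, key2 a]
    exact key a
  exact BN.core h₁ h₂ htrA
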